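/- Let A ∈ R^{m×n} satisfy the s- and 2s-RIP with constants δ_s ≤ δ_{2s} < 1, let x* be s-sparse with support S*, and let S be an index set with |S| ≤ s. Suppose x⁺ is the minimizer of ‖Ax - y'‖₂ over x supported in S, where ‖A_S^T(y' - Ax*)‖₂ ≤ b₁ and ‖(x*)_{S* \ S}‖₂ ≤ b₂. Then ‖(x⁺)_S - (x*)_S‖₂ ≤ (b₁ + δ_{2s}·b₂)/(1 - δ_s). -/

import Mathlib

noncomputable def enorm {ι : Type*} [Fintype ι] (v : ι → ℝ) : ℝ := Real.sqrt (∑ i, v i ^ 2)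

def Sparse {n : ℕ} (s : ℕ) (x : Fin n → ℝ) : Prop :=
  ∃ S : Finset (Fin n), S.card ≤ s ∧ ∀ i ∉ S, x i = 0

def RIP {m n : ℕ} (A : Matrix (Fin m) (Fin n) ℝ) (s : ℕ) (δ : ℝ) : Prop :=
  ∀ x : Fin n → ℝ, Sparse s x →
    (1 - δ) * (_root_.enorm x)^2 ≤ (_root_.enorm (A.mulVec x))^2 ∧
      (_root_.enorm (A.mulVec x))^2 ≤ (1 + δ) * (_root_.enorm x)^2

lemma enorm_sq' {ι : Type*} [Fintype ι] (v : ι → ℝ) : (_root_.enorm v)^2 = ∑ i, v i ^ 2 :=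
  Real.sq_sqrt (Finset.sum_nonneg fun _ _ => sq_nonneg _)

lemma sum_sq_expand {ι : Type*} [Fintype ι] (a b : ι → ℝ) (t : ℝ) :
    ∑ i, (a i + t * b i)^2
      = (∑ i, a i^2) + 2*t*(∑ i, a i * b i) + t^2 * (∑ i, b i^2) := by
  rw [Finset.mul_sum, Finset.mul_sum, ← Finset.sum_add_distrib, ← Finset.sum_add_distrib]
  exact Finset.sum_congr rfl fun i _ => by ring

lemma cross_aux {m n s : ℕ} (A : Matrix (Fin m) (Fin n) ℝ) (δ : ℝ)
    (hRIP : RIP A (2*s) δ) (u w : Fin n → ℝ) (T : Finset (Fin n)) (hT : T.card ≤ 2*s)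
    (hu : ∀ i ∉ T, u i = 0) (hw : ∀ i ∉ T, w i = 0)
    (hdisj : ∀ i, u i * w i = 0) :
    ∑ i, (A.mulVec u) i * (A.mulVec w) i ≤ δ * ((∑ i, u i^2) + (∑ i, w i^2)) / 2 := by
  have hplus := hRIP (u + w) ⟨T, hT, fun i hi => by simp [hu i hi, hw i hi]⟩
  have hminus := hRIP (u - w) ⟨T, hT, fun i hi => by simp [hu i hi, hw i hi]⟩
  rw [enorm_sq', enorm_sq'] at hplus hminus
  have e1 : ∑ i, (u + w) i ^2 = (∑ i, u i^2) + (∑ i, w i^2) := by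
    rw [← Finset.sum_add_distrib]
    exact Finset.sum_congr rfl fun i _ => by
      have h := hdisj i; simp only [Pi.add_apply]; linear_combination 2 * h
  have e2 : ∑ i, (u - w) i ^2 = (∑ i, u i^2) + (∑ i, w i^2) := by
    rw [← Finset.sum_add_distrib]
    exact Finset.sum_congr rfl fun i _ => by
      have h := hdisj i; simp only [Pi.sub_apply]; linear_combination (-2) * h
  have e3 : ∑ i, (A.mulVec (u + w)) i ^2
      = (∑ i, (A.mulVec u) i^2) + 2*1*(∑ i, (A.mulVec u) i * (A.mulVec w) i)
        + 1^2 * (∑ i, (A.mulVec w) i^2) := by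
    rw [← sum_sq_expand]
    exact Finset.sum_congr rfl fun i _ => by
      rw [Matrix.mulVec_add]; simp
  have e4 : ∑ i, (A.mulVec (u - w)) i ^2
      = (∑ i, (A.mulVec u) i^2) + 2*(-1)*(∑ i, (A.mulVec u) i * (A.mulVec w) i)
        + (-1)^2 * (∑ i, (A.mulVec w) i^2) := by
    rw [← sum_sq_expand]
    exact Finset.sum_congr rfl fun i _ => by
      rw [Matrix.mulVec_sub]; simp; ring
  rw [e1, e3] at hplus
  rw [e2, e4] at hminus
  nlinarith [hplus.2, hminus.1]

lemma cross_bound {m n s : ℕ} (A : Matrix (Fin m) (Fin n) ℝ) (δ : ℝ) (hδ : 0 ≤ δ)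
    (hRIP : RIP A (2*s) δ) (u w : Fin n → ℝ) (T : Finset (Fin n)) (hT : T.card ≤ 2*s)
    (hu : ∀ i ∉ T, u i = 0) (hw : ∀ i ∉ T, w i = 0)
    (hdisj : ∀ i, u i * w i = 0) :
    ∑ i, (A.mulVec u) i * (A.mulVec w) i
      ≤ δ * Real.sqrt (∑ i, u i^2) * Real.sqrt (∑ i, w i^2) := by
  have hU0 : (0:ℝ) ≤ ∑ i, u i^2 := Finset.sum_nonneg fun _ _ => sq_nonneg _
  have hW0 : (0:ℝ) ≤ ∑ i, w i^2 := Finset.sum_nonneg fun _ _ => sq_nonneg _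
  by_cases hU : (∑ i, u i^2) = 0
  · have hu0 : ∀ i, u i = 0 := by
      intro i
      have := (Finset.sum_eq_zero_iff_of_nonneg (fun i _ => sq_nonneg (u i))).1 hU i
        (Finset.mem_univ i)
      exact (pow_eq_zero_iff two_ne_zero).1 this
    have : u = 0 := funext hu0
    subst this
    simp [Matrix.mulVec_zero, hU]
  by_cases hW : (∑ i, w i^2) = 0
  · have hw0 : ∀ i, w i = 0 := by
      intro i
      have := (Finset.sum_eq_zero_iff_of_nonneg (fun i _ => sq_nonneg (w i))).1 hW i
        (Finset.mem_univ i)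
      exact (pow_eq_zero_iff two_ne_zero).1 this
    have : w = 0 := funext hw0
    subst this
    simp [Matrix.mulVec_zero, hW]
  have hUpos : (0:ℝ) < ∑ i, u i^2 := lt_of_le_of_ne hU0 (Ne.symm hU)
  have hWpos : (0:ℝ) < ∑ i, w i^2 := lt_of_le_of_ne hW0 (Ne.symm hW)
  set α := Real.sqrt (∑ i, w i^2) with hα
  set β := Real.sqrt (∑ i, u i^2) with hβ
  have hα2 : α^2 = ∑ i, w i^2 := Real.sq_sqrt hW0
  have hβ2 : β^2 = ∑ i, u i^2 := Real.sq_sqrt hU0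
  have hαpos : 0 < α := Real.sqrt_pos.2 hWpos
  have hβpos : 0 < β := Real.sqrt_pos.2 hUpos
  have key := cross_aux A δ hRIP (α • u) (β • w) T hT
    (fun i hi => by simp [hu i hi]) (fun i hi => by simp [hw i hi])
    (fun i => by have := hdisj i; simp only [Pi.smul_apply, smul_eq_mul]
                 linear_combination α * β * this)
  have eAu : A.mulVec (α • u) = α • A.mulVec u := by
    rw [Matrix.mulVec_smul]
  have eAw : A.mulVec (β • w) = β • A.mulVec w := by
    rw [Matrix.mulVec_smul]
  rw [eAu, eAw] at key
  have k1 : ∑ i, (α • A.mulVec u) i * (β • A.mulVec w) i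
      = α * β * ∑ i, (A.mulVec u) i * (A.mulVec w) i := by
    rw [Finset.mul_sum]
    exact Finset.sum_congr rfl fun i _ => by simp [smul_eq_mul]; ring
  have k2 : ∑ i, ((α • u) i)^2 = α^2 * ∑ i, u i^2 := by
    rw [Finset.mul_sum]
    exact Finset.sum_congr rfl fun i _ => by simp [smul_eq_mul]; ring
  have k3 : ∑ i, ((β • w) i)^2 = β^2 * ∑ i, w i^2 := by
    rw [Finset.mul_sum]
    exact Finset.sum_congr rfl fun i _ => by simp [smul_eq_mul]; ring
  rw [k1, k2, k3, hα2, hβ2] at key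
  have hαβ : 0 < α * β := mul_pos hαpos hβpos
  rw [← mul_le_mul_iff_of_pos_right hαβ]
  have e5 : δ * ((∑ i, w i^2)*(∑ i, u i^2) + (∑ i, u i^2)*(∑ i, w i^2))/2
      = δ * β * α * (α*β) := by rw [← hα2, ← hβ2]; ring
  linarith [key, e5]
def colSub {m n : ℕ} (A : Matrix (Fin m) (Fin n) ℝ) (S : Finset (Fin n)) :
    Matrix (Fin m) S ℝ := fun i j => A i (j : Fin n)

open scoped Classical

theorem stmt15 {m n s : ℕ} (A : Matrix (Fin m) (Fin n) ℝ)
    (δs δ2s : ℝ) (h0 : 0 ≤ δs) (h12 : δs ≤ δ2s) (h2 : δ2s < 1)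
    (hRIPs : RIP A s δs) (hRIP2s : RIP A (2 * s) δ2s)
    (xstar : Fin n → ℝ) (hsp : Sparse s xstar)
    (S : Finset (Fin n)) (hS : S.card ≤ s)
    (y' : Fin m → ℝ) (b₁ b₂ : ℝ)
    (hb₁ : _root_.enorm ((colSub A S).transpose.mulVec (y' - A.mulVec xstar)) ≤ b₁)
    (hb₂ : Real.sqrt (∑ i ∈ (Finset.univ.filter fun i => xstar i ≠ 0) \ S, xstar i ^ 2) ≤ b₂)
    (xp : Fin n → ℝ) (hxpsupp : ∀ i ∉ S, xp i = 0)
    (hxpmin : ∀ z : Fin n → ℝ, (∀ i ∉ S, z i = 0) →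
      _root_.enorm (A.mulVec xp - y') ≤ _root_.enorm (A.mulVec z - y')) :
    Real.sqrt (∑ i ∈ S, (xp i - xstar i) ^ 2) ≤ (b₁ + δ2s * b₂) / (1 - δs) := by
  obtain ⟨S', hS'card, hS'supp⟩ := hsp
  set r : Fin m → ℝ := y' - A.mulVec xstar with hrdef
  set u : Fin n → ℝ := fun i => if i ∈ S then xp i - xstar i else 0 with hudef
  set w : Fin n → ℝ := fun i => if i ∈ S then 0 else xstar i with hwdef
  have husupp : ∀ i ∉ S, u i = 0 := fun i hi => if_neg hi
  have hdisj : ∀ i, u i * w i = 0 := fun i => by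
    by_cases h : i ∈ S <;> simp [hudef, hwdef, h]
  -- the positivity facts
  have hδ2s0 : 0 ≤ δ2s := le_trans h0 h12
  have hb₁0 : 0 ≤ b₁ := le_trans (Real.sqrt_nonneg _) hb₁
  have hb₂0 : 0 ≤ b₂ := le_trans (Real.sqrt_nonneg _) hb₂
  have h1δ : 0 < 1 - δs := by linarith
  -- abbreviations
  set U := ∑ i, u i ^ 2 with hUdef
  set W := ∑ i, w i ^ 2 with hWdef
  have hU0 : 0 ≤ U := Finset.sum_nonneg fun _ _ => sq_nonneg _
  set N := Real.sqrt (∑ i ∈ S, (xp i - xstar i) ^ 2) with hNdef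
  have hN0 : 0 ≤ N := Real.sqrt_nonneg _
  have hUM : U = ∑ i ∈ S, (xp i - xstar i) ^ 2 := by
    rw [hUdef]
    rw [← Finset.sum_subset (Finset.subset_univ S) (fun i _ hi => by
      rw [husupp i hi]; ring)]
    exact Finset.sum_congr rfl fun i hi => by rw [hudef]; simp [hi]
  have hNU : N = Real.sqrt U := by rw [hNdef, hUM]
  have hN2 : N ^ 2 = U := by rw [hNU]; exact Real.sq_sqrt hU0
  -- bound on W
  have hWb : Real.sqrt W ≤ b₂ := by
    have : W = ∑ i ∈ (Finset.univ.filter fun i => xstar i ≠ 0) \ S, xstar i ^ 2 := by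
      rw [hWdef]
      rw [← Finset.sum_subset (Finset.subset_univ _) (fun i _ hi => ?_)]
      · exact Finset.sum_congr rfl fun i hi => by
          rw [hwdef]
          simp only [Finset.mem_sdiff] at hi
          simp [hi.2]
      · rw [hwdef]
        simp only [Finset.mem_sdiff, Finset.mem_filter, Finset.mem_univ, true_and,
          not_and, not_not] at hi
        by_cases h : i ∈ S
        · simp [h]
        · have : xstar i = 0 := by by_contra hne; exact h (hi hne)
          simp [h, this]
    rw [this]; exact hb₂
  -- normal equations
  have hne : ∀ z : Fin n → ℝ, (∀ i ∉ S, z i = 0) →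
      ∑ i, (A.mulVec z) i * (A.mulVec xp - y') i = 0 := by
    intro z hz
    set c := ∑ i, (A.mulVec z) i * (A.mulVec xp - y') i with hc
    set Q := ∑ i, (A.mulVec z) i ^ 2 with hQ
    have hQ0 : 0 ≤ Q := Finset.sum_nonneg fun _ _ => sq_nonneg _
    have hineq : ∀ t : ℝ, 0 ≤ 2*t*c + t^2*Q := by
      intro t
      have hsupp : ∀ i ∉ S, (xp + t • z) i = 0 := fun i hi => by
        simp [hxpsupp i hi, hz i hi]
      have h := hxpmin (xp + t • z) hsupp
      have h2 := pow_le_pow_left₀ (Real.sqrt_nonneg _) h 2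
      simp only [_root_.enorm] at h2
      rw [Real.sq_sqrt (by positivity), Real.sq_sqrt (by positivity)] at h2
      have h3 : ∑ i, ((A.mulVec (xp + t • z) - y') i)^2
          = ∑ i, ((A.mulVec xp - y') i + t * (A.mulVec z) i)^2 :=
        Finset.sum_congr rfl fun i _ => by
          rw [Matrix.mulVec_add, Matrix.mulVec_smul]
          simp only [Pi.sub_apply, Pi.add_apply, Pi.smul_apply, smul_eq_mul]
          ring_nf
      rw [h3, sum_sq_expand] at h2
      have hcc : c = ∑ i, (A.mulVec xp - y') i * (A.mulVec z) i := by
        rw [hc]; exact Finset.sum_congr rfl fun i _ => mul_comm _ _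
      rw [hcc, hQ]
      linarith [h2]
    by_contra hc0
    have hcpos : 0 < c^2 := lt_of_le_of_ne (sq_nonneg c) (Ne.symm (pow_ne_zero 2 hc0))
    have hQ1 : (0:ℝ) < Q + 1 := by linarith
    have h := hineq (-c/(Q+1))
    have hpos : (0:ℝ) < (Q+1)^2 := by positivity
    have hexp : 2 * (-c/(Q+1)) * c + (-c/(Q+1))^2 * Q = (-(c^2*(Q+2)))/(Q+1)^2 := by
      field_simp; ring
    rw [hexp] at h
    have h3 := (le_div_iff₀ hpos).1 h
    rw [zero_mul] at h3
    nlinarith [h3, hcpos, hQ0]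
  -- decomposition  A xp - y' = A u - A w - r
  have hxpdec : xp = u + xstar - w := by
    funext i
    show xp i = u i + xstar i - w i
    by_cases h : i ∈ S
    · simp only [hudef, hwdef, if_pos h]; ring
    · simp only [hudef, hwdef, if_neg h, hxpsupp i h]; ring
  have hdecomp : A.mulVec xp - y' = A.mulVec u - A.mulVec w - r := by
    rw [hxpdec, Matrix.mulVec_sub, Matrix.mulVec_add, hrdef]
    abel
  -- split the normal equation at z = u
  set p := ∑ i, (A.mulVec u) i * (A.mulVec w) i with hp
  set d := ∑ i, (A.mulVec u) i * r i with hd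
  set AU := ∑ i, (A.mulVec u) i ^ 2 with hAU
  have hsplit : AU = p + d := by
    have h := hne u husupp
    rw [hdecomp] at h
    have : ∑ i, (A.mulVec u) i * (A.mulVec u - A.mulVec w - r) i
        = AU - p - d := by
      rw [hAU, hp, hd, ← Finset.sum_sub_distrib, ← Finset.sum_sub_distrib]
      exact Finset.sum_congr rfl fun i _ => by
        simp only [Pi.sub_apply]; ring
    rw [this] at h
    linarith
  -- RIP lower bound
  have hrip : (1 - δs) * U ≤ AU := by
    have h := (hRIPs u ⟨S, hS, husupp⟩).1
    rw [enorm_sq', enorm_sq'] at h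
    exact h
  -- cross-term bound
  have hcross : p ≤ δ2s * N * b₂ := by
    have hT : (S ∪ S').card ≤ 2 * s :=
      le_trans (Finset.card_union_le _ _) (by omega)
    have hw' : ∀ i ∉ S ∪ S', w i = 0 := fun i hi => by
      simp only [Finset.mem_union, not_or] at hi
      rw [hwdef]; simp [hS'supp i hi.2]
    have hu' : ∀ i ∉ S ∪ S', u i = 0 := fun i hi => by
      simp only [Finset.mem_union, not_or] at hi
      exact husupp i hi.1
    have h := cross_bound A δ2s hδ2s0 hRIP2s u w (S ∪ S') hT hu' hw' hdisj
    calc p ≤ δ2s * Real.sqrt U * Real.sqrt W := h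
      _ = δ2s * N * Real.sqrt W := by rw [hNU]
      _ ≤ δ2s * N * b₂ := by
          apply mul_le_mul_of_nonneg_left hWb
          exact mul_nonneg hδ2s0 hN0
  -- bound on d
  have hdbound : d ≤ N * b₁ := by
    set g : Fin n → ℝ := fun j => ∑ i, A i j * r i with hg
    have hd1 : d = ∑ j ∈ S, u j * g j := by
      rw [hd]
      calc ∑ i, (A.mulVec u) i * r i
          = ∑ i, ∑ j, A i j * u j * r i := by
            refine Finset.sum_congr rfl fun i _ => ?_
            rw [Matrix.mulVec, dotProduct, Finset.sum_mul]
        _ = ∑ j, ∑ i, A i j * u j * r i := Finset.sum_comm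
        _ = ∑ j, u j * g j := by
            refine Finset.sum_congr rfl fun j _ => ?_
            rw [hg, Finset.mul_sum]
            exact Finset.sum_congr rfl fun i _ => by ring
        _ = ∑ j ∈ S, u j * g j :=
            (Finset.sum_subset (Finset.subset_univ S) fun j _ hj => by
              rw [husupp j hj, zero_mul]).symm
    have hcs : ∑ j ∈ S, u j * g j
        ≤ Real.sqrt (∑ j ∈ S, u j ^ 2) * Real.sqrt (∑ j ∈ S, g j ^ 2) :=
      Real.sum_mul_le_sqrt_mul_sqrt S u g
    have hsu : Real.sqrt (∑ j ∈ S, u j ^ 2) = N := by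
      rw [hNdef]
      congr 1
      exact Finset.sum_congr rfl fun j hj => by rw [hudef]; simp [hj]
    have hsg : Real.sqrt (∑ j ∈ S, g j ^ 2)
        = _root_.enorm ((colSub A S).transpose.mulVec r) := by
      rw [_root_.enorm]
      congr 1
      rw [← Finset.sum_coe_sort S (fun j => g j ^ 2)]
      refine Finset.sum_congr rfl fun j _ => ?_
      congr 1
    rw [hd1]
    calc ∑ j ∈ S, u j * g j ≤ Real.sqrt (∑ j ∈ S, u j ^ 2) * Real.sqrt (∑ j ∈ S, g j ^ 2) := hcs
      _ = N * _root_.enorm ((colSub A S).transpose.mulVec r) := by rw [hsu, hsg]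
      _ ≤ N * b₁ := mul_le_mul_of_nonneg_left (by rw [hrdef] at hb₁ ⊢; exact hb₁) hN0
  -- final chain
  have hchain : (1 - δs) * N ^ 2 ≤ N * (b₁ + δ2s * b₂) := by
    rw [hN2]
    calc (1 - δs) * U ≤ AU := hrip
      _ = p + d := hsplit
      _ ≤ δ2s * N * b₂ + N * b₁ := add_le_add hcross hdbound
      _ = N * (b₁ + δ2s * b₂) := by ring
  clear_value N U W AU p d r u w
  have hgoal : N * (1 - δs) ≤ b₁ + δ2s * b₂ := by
    rcases eq_or_lt_of_le hN0 with h | h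
    · rw [← h, zero_mul]
      have := mul_nonneg hδ2s0 hb₂0
      linarith
    · have h' : N * (N * (1 - δs)) ≤ N * (b₁ + δ2s * b₂) := by
        calc N * (N * (1 - δs)) = (1 - δs) * N ^ 2 := by ring
          _ ≤ N * (b₁ + δ2s * b₂) := hchain
      exact le_of_mul_le_mul_left h' h
  exact (le_div_iff₀ h1δ).2 hgoal
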